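/- Let h : B → A be a homomorphism of distributive lattices with dual map f : Spec A → Spec B between Priestley spaces. Then h has a right adjoint if and only if for every open down-set U ⊆ Spec A, the downward closure ↓f[U] is open in Spec B. -/
import Mathlib


/-- A point of the Priestley dual of a bounded lattice `A`: a bounded lattice
homomorphism `A → 2`, encoded as a `Bool`-valued function. -/
def IsSpecPoint {A : Type*} [Lattice A] [BoundedOrder A] (x : A → Bool) : Prop :=
  (∀ a b : A, x (a ⊓ b) = (x a && x b)) ∧ (∀ a b : A, x (a ⊔ b) = (x a || x b)) ∧
    x ⊤ = true ∧ x ⊥ = false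

/-- The Priestley dual space of a bounded lattice `A`, with the pointwise order and the
subspace topology inherited from the product topology on `A → Bool` (`Bool` discrete). -/
abbrev SpecL (A : Type*) [Lattice A] [BoundedOrder A] : Type _ :=
  {x : A → Bool // IsSpecPoint x}

namespace Stmt17

variable {A : Type*} [DistribLattice A] [BoundedOrder A]

lemma pt_mono (x : SpecL A) {a b : A} (hab : a ≤ b) (ha : x.1 a = true) : x.1 b = true := by
  have h : x.1 a = (x.1 a && x.1 b) := by rw [← x.2.1, inf_eq_left.mpr hab]
  rw [ha] at h; cases hb : x.1 b <;> simp [hb] at h ⊢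

lemma pt_anti (x : SpecL A) {a b : A} (hab : a ≤ b) (hb : x.1 b = false) : x.1 a = false := by
  cases ha : x.1 a with
  | false => rfl
  | true => rw [pt_mono x hab ha] at hb; simp at hb

/-- Prime-filter separation: a point true on a filter and false at `a`. -/
lemma exists_specL_of_filter {F : Set A} (hF : Order.IsPFilter F) {a : A}
    (ha : ∀ c ∈ F, ¬ c ≤ a) :
    ∃ x : SpecL A, (∀ c ∈ F, x.1 c = true) ∧ x.1 a = false := by
  have hdisj : Disjoint (hF.toPFilter : Set A) ((Order.Ideal.principal a : Order.Ideal A) : Set A) := by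
    rw [Set.disjoint_left]
    intro c hc hc'
    exact ha c hc (by simpa using hc')
  obtain ⟨J, hJprime, hIJ, hJdisj⟩ :=
    DistribLattice.prime_ideal_of_disjoint_filter_ideal hdisj
  have hJprop : Order.Ideal.IsProper J := hJprime.toIsProper
  have hinf : ∀ c d : A, (c ⊓ d ∈ J ↔ c ∈ J ∨ d ∈ J) := fun c d =>
    ⟨hJprime.mem_or_mem, fun hcd => hcd.elim (fun hc => J.lower inf_le_left hc)
      (fun hd => J.lower inf_le_right hd)⟩
  classical
  refine ⟨⟨fun c => decide (c ∉ J), ?_, ?_, ?_, ?_⟩, ?_, ?_⟩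
  · intro c d
    by_cases hc : c ∈ J <;> by_cases hd : d ∈ J <;> simp [hc, hd, hinf c d]
  · intro c d
    by_cases hc : c ∈ J <;> by_cases hd : d ∈ J <;>
      simp [hc, hd, Order.Ideal.sup_mem_iff]
  · simp [hJprop.top_notMem]
  · simp [J.bot_mem]
  · intro c hc
    have : c ∉ ↑J := Set.disjoint_left.mp hJdisj (show c ∈ (hF.toPFilter : Set A) from hc)
    simpa using this
  · have : a ∈ J := hIJ (by simp [Order.Ideal.mem_principal])
    simp [this]

lemma le_iff_forall_pt {a b : A} :
    a ≤ b ↔ ∀ x : SpecL A, x.1 a = true → x.1 b = true := by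
  constructor
  · intro hab x ha
    exact pt_mono x hab ha
  · intro H
    by_contra hab
    have hF : Order.IsPFilter {c : A | a ≤ c} :=
      Order.IsPFilter.of_def ⟨a, le_rfl⟩
        (fun c hc d hd => ⟨a, le_rfl, hc, hd⟩)
        (fun hxy hx => le_trans hx hxy)
    obtain ⟨x, hx1, hx2⟩ := exists_specL_of_filter hF
      (fun c hc hcb => hab (le_trans hc hcb))
    rw [H x (hx1 a le_rfl)] at hx2
    simp at hx2




variable {A : Type*} [DistribLattice A] [BoundedOrder A]

lemma continuous_ev (a : A) : Continuous fun x : SpecL A => x.1 a :=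
  (continuous_apply a).comp continuous_subtype_val

lemma isClosed_spec : IsClosed {x : A → Bool | IsSpecPoint x} := by
  have hc : ∀ c : A, Continuous fun x : A → Bool => x c := fun c => continuous_apply c
  have h1 : {x : A → Bool | IsSpecPoint x} =
      (⋂ a : A, ⋂ b : A, {x : A → Bool | x (a ⊓ b) = (x a && x b)}) ∩
      ((⋂ a : A, ⋂ b : A, {x : A → Bool | x (a ⊔ b) = (x a || x b)}) ∩
      ({x : A → Bool | x ⊤ = true} ∩ {x : A → Bool | x ⊥ = false})) := by
    ext x
    simp only [IsSpecPoint, Set.mem_inter_iff, Set.mem_iInter, Set.mem_setOf_eq, and_assoc]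
  rw [h1]
  refine IsClosed.inter ?_ (IsClosed.inter ?_ (IsClosed.inter ?_ ?_))
  · refine isClosed_iInter fun a => isClosed_iInter fun b => isClosed_eq (hc _) ?_
    exact (continuous_of_discreteTopology (f := fun p : Bool × Bool => p.1 && p.2)).comp
      ((hc a).prodMk (hc b))
  · refine isClosed_iInter fun a => isClosed_iInter fun b => isClosed_eq (hc _) ?_
    exact (continuous_of_discreteTopology (f := fun p : Bool × Bool => p.1 || p.2)).comp
      ((hc a).prodMk (hc b))
  · exact isClosed_eq (hc _) continuous_const
  · exact isClosed_eq (hc _) continuous_const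

instance : CompactSpace (SpecL A) :=
  isCompact_iff_compactSpace.mp isClosed_spec.isCompact

lemma isOpen_V (a : A) : IsOpen {x : SpecL A | x.1 a = false} :=
  (isOpen_discrete {false}).preimage (continuous_ev a)

lemma isClosed_V (a : A) : IsClosed {x : SpecL A | x.1 a = false} :=
  (isClosed_discrete {false}).preimage (continuous_ev a)

lemma isOpen_T (a : A) : IsOpen {x : SpecL A | x.1 a = true} :=
  (isOpen_discrete {true}).preimage (continuous_ev a)

lemma isLowerSet_V (a : A) : IsLowerSet {x : SpecL A | x.1 a = false} := by
  intro y z hzy hy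
  have : z.1 a ≤ y.1 a := hzy a
  simp only [Set.mem_setOf_eq] at hy ⊢
  rw [hy] at this
  exact le_bot_iff.mp this

lemma pt_finset_inf {ι : Type*} (x : SpecL A) (t : Finset ι) (g : ι → A) :
    x.1 (t.inf g) = true ↔ ∀ i ∈ t, x.1 (g i) = true := by
  classical
  induction t using Finset.induction with
  | empty => simp [x.2.2.2.1]
  | insert hnotmem ih =>
    rw [Finset.inf_insert, x.2.1]
    simp_all

lemma pt_finset_sup {ι : Type*} (x : SpecL A) (t : Finset ι) (g : ι → A) :
    x.1 (t.sup g) = false ↔ ∀ i ∈ t, x.1 (g i) = false := by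
  classical
  induction t using Finset.induction with
  | empty => simp [x.2.2.2.2]
  | insert hnotmem ih =>
    rw [Finset.sup_insert, x.2.2.1]
    simp_all

/-- Every open down-set is a union of basic clopen down-sets. -/
lemma exists_basic_lower {U : Set (SpecL A)} (hU : IsOpen U) (hlow : IsLowerSet U)
    {x : SpecL A} (hx : x ∈ U) :
    ∃ a : A, x.1 a = false ∧ {z : SpecL A | z.1 a = false} ⊆ U := by
  classical
  have hKcl : IsClosed Uᶜ := hU.isClosed_compl
  have hK : IsCompact Uᶜ := hKcl.isCompact
  -- for each z ∉ U, pick b with z.1 b = true, x.1 b = false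
  have hsep : ∀ z : SpecL A, z ∈ Uᶜ → ∃ b : A, z.1 b = true ∧ x.1 b = false := by
    intro z hz
    by_contra hcon
    push_neg at hcon
    have hzx : z ≤ x := by
      intro b
      cases hzb : z.1 b with
      | false => simp
      | true =>
        cases hxb : x.1 b with
        | true => simp
        | false => exact absurd hxb (by simpa [hzb] using hcon b)
    exact hz (hlow hzx hx)
  choose b hb1 hb2 using hsep
  -- cover Uᶜ by the opens {w | w.1 (b z hz) = true}
  obtain ⟨t, ht⟩ := hK.elim_finite_subcover
    (fun z : {z : SpecL A // z ∈ Uᶜ} => {w : SpecL A | w.1 (b z.1 z.2) = true})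
    (fun z => isOpen_T _)
    (fun z hz => Set.mem_iUnion.mpr ⟨⟨z, hz⟩, hb1 z hz⟩)
  refine ⟨t.sup (fun z => b z.1 z.2), ?_, ?_⟩
  · exact (pt_finset_sup x t _).mpr fun i _ => hb2 i.1 i.2
  · intro w hw
    by_contra hwU
    obtain ⟨i, hit, hi⟩ := Set.mem_iUnion₂.mp (ht hwU)
    have hthis : w.1 (b i.1 i.2) = false := (pt_finset_sup w t _).mp hw i hit
    have hi' : w.1 (b i.1 i.2) = true := hi
    rw [hthis] at hi'
    simp at hi'

/-- A clopen down-set equals a basic one. -/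
lemma clopen_lower_eq_V {D : Set (SpecL A)} (hDo : IsOpen D) (hDc : IsClosed D)
    (hlow : IsLowerSet D) : ∃ a : A, D = {y : SpecL A | y.1 a = false} := by
  classical
  have hDcpt : IsCompact D := hDc.isCompact
  have := fun (y : {y : SpecL A // y ∈ D}) => exists_basic_lower hDo hlow y.2
  choose b hb1 hb2 using this
  obtain ⟨t, ht⟩ := hDcpt.elim_finite_subcover
    (fun y : {y : SpecL A // y ∈ D} => {w : SpecL A | w.1 (b y) = false})
    (fun y => isOpen_V _)
    (fun y hy => Set.mem_iUnion.mpr ⟨⟨y, hy⟩, hb1 ⟨y, hy⟩⟩)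
  refine ⟨t.inf b, ?_⟩
  ext y
  constructor
  · intro hy
    obtain ⟨i, hit, hi⟩ := Set.mem_iUnion₂.mp (ht hy)
    exact pt_anti y (Finset.inf_le hit) hi
  · intro hy
    simp only [Set.mem_setOf_eq] at hy
    by_contra hyD
    have hall : ∀ i ∈ t, y.1 (b i) = true := by
      intro i hit
      cases hbi : y.1 (b i) with
      | true => rfl
      | false => exact absurd (hb2 i hbi) hyD
    have : y.1 (t.inf b) = true := (pt_finset_inf y t b).mpr hall
    rw [this] at hy; simp at hy

/-- The lower closure of a compact set is closed. -/
lemma isClosed_lowerClosure_of_isCompact {K : Set (SpecL A)} (hK : IsCompact K) :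
    IsClosed (↑(lowerClosure K) : Set (SpecL A)) := by
  classical
  rw [← isOpen_compl_iff, isOpen_iff_forall_mem_open]
  intro y hy
  have hsep : ∀ x : SpecL A, x ∈ K → ∃ b : A, y.1 b = true ∧ x.1 b = false := by
    intro x hx
    by_contra hcon
    push_neg at hcon
    have hyx : y ≤ x := by
      intro b
      cases hyb : y.1 b with
      | false => simp
      | true =>
        cases hxb : x.1 b with
        | true => simp
        | false => exact absurd hxb (by simpa [hyb] using hcon b)
    exact hy (mem_lowerClosure.mpr ⟨x, hx, hyx⟩)
  choose b hb1 hb2 using hsep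
  obtain ⟨t, ht⟩ := hK.elim_finite_subcover
    (fun x : {x : SpecL A // x ∈ K} => {w : SpecL A | w.1 (b x.1 x.2) = false})
    (fun x => isOpen_V _)
    (fun x hx => Set.mem_iUnion.mpr ⟨⟨x, hx⟩, hb2 x hx⟩)
  refine ⟨⋂ i ∈ t, {w : SpecL A | w.1 (b i.1 i.2) = true}, ?_, ?_, ?_⟩
  · intro w hw hwK
    obtain ⟨x, hxK, hwx⟩ := mem_lowerClosure.mp hwK
    obtain ⟨i, hit, hi⟩ := Set.mem_iUnion₂.mp (ht hxK)
    have h1 : w.1 (b i.1 i.2) = true := (Set.mem_iInter₂.mp hw) i hit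
    have hi' : x.1 (b i.1 i.2) = false := hi
    have h2 : w.1 (b i.1 i.2) ≤ x.1 (b i.1 i.2) := hwx _
    rw [h1, hi'] at h2
    exact absurd h2 (by decide)
  · exact isOpen_biInter_finset fun i _ => isOpen_T _
  · exact Set.mem_iInter₂.mpr fun i _ => hb1 i.1 i.2


end Stmt17

/-- A homomorphism `h : B → A` of bounded distributive lattices has a
right adjoint iff its Priestley dual `f : Spec A → Spec B`, `f x = x ∘ h`, satisfies: for
every open down-set `U ⊆ Spec A`, the downward closure `↓f[U]` is open in `Spec B`. -/
theorem stmt_17 {A B : Type*} [DistribLattice A] [BoundedOrder A]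
    [DistribLattice B] [BoundedOrder B]
    (h : BoundedLatticeHom B A)
    (f : SpecL A → SpecL B)
    (hf : ∀ (x : SpecL A) (b : B), (f x).1 b = x.1 (h b)) :
    (∃ q : A → B, ∀ (a : A) (b : B), h b ≤ a ↔ b ≤ q a) ↔
      ∀ U : Set (SpecL A), IsOpen U → IsLowerSet U →
        IsOpen (↑(lowerClosure (f '' U)) : Set (SpecL B)) := by
  classical
  open Stmt17 in
  have hfc : Continuous f := by
    have hc : Continuous fun x : SpecL A => (f x).1 := by
      have he : (fun x : SpecL A => (f x).1) = fun x => fun b => x.1 (h b) := by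
        funext x b; exact hf x b
      rw [he]
      exact continuous_pi fun b => Stmt17.continuous_ev (h b)
    exact continuous_induced_rng.mpr hc
  constructor
  · rintro ⟨q, hq⟩ U hUo hUl
    have key : (↑(lowerClosure (f '' U)) : Set (SpecL B)) =
        ⋃ a ∈ {a : A | {z : SpecL A | z.1 a = false} ⊆ U},
          {y : SpecL B | y.1 (q a) = false} := by
      ext y
      constructor
      · intro hy
        obtain ⟨z, hz, hyz⟩ := mem_lowerClosure.mp hy
        obtain ⟨x, hxU, rfl⟩ := hz
        obtain ⟨a, hxa, haS⟩ := Stmt17.exists_basic_lower hUo hUl hxU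
        refine Set.mem_iUnion₂.mpr ⟨a, haS, ?_⟩
        have h1 : h (q a) ≤ a := (hq a (q a)).mpr le_rfl
        have h2 : y.1 (q a) ≤ (f x).1 (q a) := hyz _
        rw [hf x (q a)] at h2
        have h3 : x.1 (h (q a)) = false := Stmt17.pt_anti x h1 hxa
        rw [h3] at h2
        cases hyq : y.1 (q a) with
        | false => exact hyq
        | true => rw [hyq] at h2; exact absurd h2 (by decide)
      · intro hy
        obtain ⟨a, haS, hyqa⟩ := Set.mem_iUnion₂.mp hy
        have hyqa : y.1 (q a) = false := hyqa
        set F : Set A := {c : A | ∃ b : B, y.1 b = true ∧ h b ≤ c} with hF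
        have hFpf : Order.IsPFilter F := by
          refine Order.IsPFilter.of_def ⟨⊤, ⊤, y.2.2.2.1, le_top⟩ ?_ ?_
          · rintro c ⟨b1, hb1, hb1c⟩ d ⟨b2, hb2, hb2d⟩
            refine ⟨h (b1 ⊓ b2), ⟨b1 ⊓ b2, ?_, le_rfl⟩, ?_, ?_⟩
            · rw [y.2.1, hb1, hb2]; rfl
            · rw [map_inf]; exact le_trans inf_le_left hb1c
            · rw [map_inf]; exact le_trans inf_le_right hb2d
          · rintro c d hcd ⟨b1, hb1, hb1c⟩
            exact ⟨b1, hb1, le_trans hb1c hcd⟩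
        have hFa : ∀ c ∈ F, ¬ c ≤ a := by
          rintro c ⟨b1, hb1, hb1c⟩ hca
          have : b1 ≤ q a := (hq a b1).mp (le_trans hb1c hca)
          have := Stmt17.pt_mono y this hb1
          rw [this] at hyqa
          simp at hyqa
        obtain ⟨x, hxF, hxa⟩ := Stmt17.exists_specL_of_filter hFpf hFa
        have hxU : x ∈ U := haS hxa
        have hyfx : y ≤ f x := by
          intro b
          cases hyb : y.1 b with
          | false => simp
          | true =>
            have hx' : x.1 (h b) = true := hxF (h b) ⟨b, hyb, le_rfl⟩
            simp [hf x b, hx']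
        exact mem_lowerClosure.mpr ⟨f x, Set.mem_image_of_mem f hxU, hyfx⟩
    rw [key]
    exact isOpen_biUnion fun a _ => Stmt17.isOpen_V _
  · intro hop
    have hex : ∀ a : A, ∃ b : B,
        (↑(lowerClosure (f '' {x : SpecL A | x.1 a = false})) : Set (SpecL B)) =
          {y : SpecL B | y.1 b = false} := by
      intro a
      refine Stmt17.clopen_lower_eq_V ?_ ?_ ?_
      · exact hop _ (Stmt17.isOpen_V a) (Stmt17.isLowerSet_V a)
      · exact Stmt17.isClosed_lowerClosure_of_isCompact
          (((Stmt17.isClosed_V a).isCompact).image hfc)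
      · exact (lowerClosure _).lower
    choose q hqD using hex
    refine ⟨q, ?_⟩
    intro a b'
    constructor
    · intro hba
      rw [Stmt17.le_iff_forall_pt]
      intro y hyb
      by_contra hyqa'
      have hyqa : y.1 (q a) = false := by
        cases hc : y.1 (q a) with
        | false => rfl
        | true => exact absurd hc hyqa'
      have hyD : y ∈ (↑(lowerClosure (f '' {x : SpecL A | x.1 a = false})) : Set (SpecL B)) := by
        rw [hqD a]; exact hyqa
      obtain ⟨z, hz, hyz⟩ := mem_lowerClosure.mp hyD
      obtain ⟨x, hxa, rfl⟩ := hz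
      have h3 : x.1 (h b') = false := Stmt17.pt_anti x hba hxa
      have h2 : y.1 b' ≤ (f x).1 b' := hyz _
      rw [hyb, hf x b', h3] at h2
      exact absurd h2 (by decide)
    · intro hbq
      rw [Stmt17.le_iff_forall_pt]
      intro x hxhb
      by_contra hxa'
      have hxa : x.1 a = false := by
        cases hc : x.1 a with
        | false => rfl
        | true => exact absurd hc hxa'
      have hfxD : f x ∈ (↑(lowerClosure (f '' {x : SpecL A | x.1 a = false})) : Set (SpecL B)) :=
        subset_lowerClosure (Set.mem_image_of_mem f hxa)
      rw [hqD a] at hfxD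
      have h1 : (f x).1 b' = false := Stmt17.pt_anti (f x) hbq hfxD
      rw [hf x b', hxhb] at h1
      simp at h1
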